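/- Let x₁ ∈ Z_{g₁}ⁿ and x₂ ∈ Z_{g₂}ⁿ be two pairwise balanced vectors. Then for any positive integer h with g₁g₂h ≤ n, there exists a balanced vector y ∈ Z_hⁿ such that x₁, x₂ and y are 3-qualitatively independent, x₁ and y are pairwise balanced, and x₂ and y are pairwise balanced. -/

import Mathlib

/-- ceiling division -/
def cdiv (x k : ℕ) : ℕ := (x + k - 1) / k

lemma cdiv_le_iff {k : ℕ} (hk : 0 < k) (x z : ℕ) : cdiv x k ≤ z ↔ x ≤ k * z := by
  unfold cdiv
  rw [Nat.div_le_iff_le_mul_add_pred hk]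
  omega

lemma le_cdiv {k : ℕ} (hk : 0 < k) (x : ℕ) : x ≤ k * cdiv x k := by
  have := (cdiv_le_iff hk x (cdiv x k)).1 le_rfl
  exact this

lemma div_le_cdiv {k : ℕ} (x : ℕ) : x / k ≤ cdiv x k := by
  rcases Nat.eq_zero_or_pos k with hk | hk
  · subst hk; simp [cdiv]
  · apply Nat.div_le_div_right (c := k); omega

lemma cdiv_le_div_succ {k : ℕ} (hk : 0 < k) (x : ℕ) : cdiv x k ≤ x / k + 1 := by
  rw [cdiv_le_iff hk]
  have := Nat.div_add_mod x k
  have := Nat.mod_lt x hk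
  nlinarith

lemma cdiv_mul_self {k : ℕ} (hk : 0 < k) (z : ℕ) : cdiv (k * z) k = z := by
  apply le_antisymm
  · rw [cdiv_le_iff hk]
  · have := le_cdiv hk (k * z)
    exact Nat.le_of_mul_le_mul_left this hk

lemma cdiv_mono {k : ℕ} (hk : 0 < k) {x y : ℕ} (hxy : x ≤ y) : cdiv x k ≤ cdiv y k := by
  rw [cdiv_le_iff hk]
  calc x ≤ y := hxy
  _ ≤ k * cdiv y k := le_cdiv hk y

lemma cdiv_cdiv {g k : ℕ} (hg : 0 < g) (hk : 0 < k) (n : ℕ) :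
    cdiv (cdiv n g) k = cdiv n (g * k) := by
  apply le_antisymm
  · rw [cdiv_le_iff hk, cdiv_le_iff hg, ← mul_assoc]
    exact le_cdiv (Nat.mul_pos hg hk) n
  · rw [cdiv_le_iff (Nat.mul_pos hg hk)]
    calc n ≤ g * cdiv n g := le_cdiv hg n
    _ ≤ g * (k * cdiv (cdiv n g) k) := by
        have := le_cdiv hk (cdiv n g)
        exact Nat.mul_le_mul_left g this
    _ = g * k * cdiv (cdiv n g) k := by ring

lemma window0 {k : ℕ} (hk : 0 < k) {v n : ℕ} (h1 : n / k ≤ v) (h2 : v ≤ cdiv n k) :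
    v = n / k ∨ v = cdiv n k := by
  have := cdiv_le_div_succ hk n
  omega

/-- combine: M is a rounding of n/g, v within rounding-window of M/k, then
v is a rounding of n/(g*k). -/
lemma window {g k : ℕ} (hg : 0 < g) (hk : 0 < k) {M v n : ℕ}
    (hM : M = n / g ∨ M = cdiv n g) (h1 : M / k ≤ v) (h2 : v ≤ cdiv M k) :
    v = n / (g * k) ∨ v = cdiv n (g * k) := by
  have hlo : n / (g * k) ≤ v := by
    have e : n / (g*k) = (n/g)/k := (Nat.div_div_eq_div_mul n g k).symm
    have hM' : n / g ≤ M := by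
      rcases hM with h | h
      · omega
      · rw [h]; exact div_le_cdiv n
    calc n/(g*k) = (n/g)/k := e
    _ ≤ M / k := Nat.div_le_div_right hM'
    _ ≤ v := h1
  have hhi : v ≤ cdiv n (g * k) := by
    have hM' : M ≤ cdiv n g := by
      rcases hM with h | h
      · rw [h]; exact div_le_cdiv n
      · rw [h]
    calc v ≤ cdiv M k := h2
    _ ≤ cdiv (cdiv n g) k := cdiv_mono hk hM'
    _ = cdiv n (g*k) := cdiv_cdiv hg hk n
  have := cdiv_le_div_succ (Nat.mul_pos hg hk) n
  omega

/-- the key window-transfer inequality for iterated slicing -/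
lemma transfer {h : ℕ} (hh : 0 < h) {x s : ℕ}
    (h1 : x / (h+1) ≤ s) (h2 : s ≤ cdiv x (h+1)) :
    s ≤ x ∧ x / (h+1) ≤ (x - s) / h ∧ cdiv (x - s) h ≤ cdiv x (h+1) := by
  obtain ⟨q, r, hx, hrlt⟩ : ∃ q r, x = (h+1)*q + r ∧ r < h+1 :=
    ⟨x / (h+1), x % (h+1), by rw [Nat.div_add_mod], Nat.mod_lt x (by omega)⟩
  have hq : x / (h+1) = q := by
    rw [hx, Nat.mul_add_div (by omega), Nat.div_eq_of_lt hrlt]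
    omega
  have hc : cdiv x (h+1) = if r = 0 then q else q + 1 := by
    apply le_antisymm
    · rw [cdiv_le_iff (by omega)]
      split <;> nlinarith
    · split
      · next h0 => rw [← hq]; exact div_le_cdiv x
      · next h0 =>
        have hlt : q < cdiv x (h+1) := by
          have hle := le_cdiv (k := h+1) (by omega) x
          by_contra hcon
          push_neg at hcon
          have := Nat.mul_le_mul_left (h+1) hcon
          omega
        omega
  rw [hq] at h1
  rw [hc] at h2
  have e1 : (h+1)*q = h*q + q := by ring
  have e2 : q*h = h*q := by ring
  have e3 : h*(q+1) = h*q + h := by ring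
  by_cases hr0 : r = 0
  · rw [if_pos hr0] at h2
    refine ⟨by omega, ?_, ?_⟩
    · rw [hq, Nat.le_div_iff_mul_le hh]
      omega
    · rw [cdiv_le_iff hh, hc, if_pos hr0]
      omega
  · rw [if_neg hr0] at h2
    refine ⟨by omega, ?_, ?_⟩
    · rw [hq, Nat.le_div_iff_mul_le hh]
      omega
    · rw [cdiv_le_iff hh, hc, if_neg hr0]
      omega


section Rank
variable {n : ℕ}

/-- rank of `i` within finset `S` -/
def rnk (S : Finset (Fin n)) (i : Fin n) : ℕ := (S.filter (fun j => j < i)).card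

lemma rnk_lt_card {S : Finset (Fin n)} {i : Fin n} (hi : i ∈ S) : rnk S i < S.card := by
  apply Finset.card_lt_card
  constructor
  · exact Finset.filter_subset _ _
  · intro hsub
    have := hsub hi
    simp at this

lemma rnk_strictmono {S : Finset (Fin n)} {i j : Fin n} (hi : i ∈ S) (hij : i < j) :
    rnk S i < rnk S j := by
  have hsub : insert i (S.filter (fun k => k < i)) ⊆ S.filter (fun k => k < j) := by
    intro k hk
    rcases Finset.mem_insert.1 hk with rfl | hk
    · exact Finset.mem_filter.2 ⟨hi, hij⟩
    · rcases Finset.mem_filter.1 hk with ⟨h1, h2⟩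
      exact Finset.mem_filter.2 ⟨h1, lt_trans h2 hij⟩
  have hcard := Finset.card_le_card hsub
  rw [Finset.card_insert_of_notMem (by simp)] at hcard
  exact hcard

lemma rnk_injOn {S : Finset (Fin n)} {i j : Fin n} (hi : i ∈ S) (hj : j ∈ S)
    (hij : rnk S i = rnk S j) : i = j := by
  rcases lt_trichotomy i j with h | h | h
  · exact absurd hij (Nat.ne_of_lt (rnk_strictmono hi h))
  · exact h
  · exact absurd hij.symm (Nat.ne_of_lt (rnk_strictmono hj h))

/-- counting members of S by a predicate of their rank -/
lemma card_filter_rnk (S : Finset (Fin n)) (p : ℕ → Prop) [DecidablePred p] :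
    (S.filter (fun i => p (rnk S i))).card = ((Finset.range S.card).filter p).card := by
  apply Finset.card_bij (fun i _ => rnk S i)
  · intro i hi
    rcases Finset.mem_filter.1 hi with ⟨h1, h2⟩
    exact Finset.mem_filter.2 ⟨Finset.mem_range.2 (rnk_lt_card h1), h2⟩
  · intro i hi j hj hij
    exact rnk_injOn (Finset.mem_filter.1 hi).1 (Finset.mem_filter.1 hj).1 hij
  · intro r hr
    rcases Finset.mem_filter.1 hr with ⟨h1, h2⟩
    obtain ⟨i, hiS, hir⟩ := Finset.surj_on_of_inj_on_of_card_le (fun i _ => rnk S i)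
      (fun i hi => Finset.mem_range.2 (rnk_lt_card hi))
      (fun i j hi hj => rnk_injOn hi hj)
      (by simp) r h1
    exact ⟨i, Finset.mem_filter.2 ⟨hiS, by rw [hir] at h2; exact h2⟩, hir.symm⟩

end Rank

section ListCount
variable {α : Type*} [DecidableEq α]

lemma card_filter_getD (L : List α) (d : α) (c : α) :
    ((Finset.range L.length).filter (fun r => L.getD r d = c)).card = L.count c := by
  induction L using List.reverseRecOn with
  | nil => simp
  | append_singleton L x ih =>
    rw [List.length_append, List.length_singleton, Finset.range_add_one,
        Finset.filter_insert]
    have hgd : ∀ r < L.length, (L ++ [x]).getD r d = L.getD r d := by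
      intro r hr
      rw [List.getD_append _ _ _ _ hr]
    have hmain : ((Finset.range L.length).filter (fun r => (L ++ [x]).getD r d = c)).card
        = L.count c := by
      rw [← ih]
      apply Finset.card_bij (fun r _ => r)
      · intro r hr
        rcases Finset.mem_filter.1 hr with ⟨h1, h2⟩
        refine Finset.mem_filter.2 ⟨h1, ?_⟩
        rw [← hgd r (Finset.mem_range.1 h1)]
        exact h2
      · intro r _ u _ hru; exact hru
      · intro r hr
        rcases Finset.mem_filter.1 hr with ⟨h1, h2⟩
        exact ⟨r, Finset.mem_filter.2 ⟨h1, by rw [hgd r (Finset.mem_range.1 h1)]; exact h2⟩, rfl⟩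
    have hlast : (L ++ [x]).getD L.length d = x := by
      rw [List.getD_append_right _ _ _ _ (le_refl _)]
      simp
    rw [List.count_append]
    by_cases hxc : x = c
    · rw [if_pos (by rw [hlast]; exact hxc)]
      rw [Finset.card_insert_of_notMem (by simp)]
      rw [hmain]
      simp [hxc]
    · rw [if_neg (by rw [hlast]; exact hxc)]
      rw [hmain]
      simp [List.count_singleton, hxc]

end ListCount


section Cycle

/-- cyclic successor on `Fin k` -/
def cyc {k : ℕ} (hk : 0 < k) (t : Fin k) : Fin k :=
  if h : t.val + 1 < k then ⟨t.val + 1, h⟩ else ⟨0, hk⟩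

lemma cyc_injective {k : ℕ} (hk : 0 < k) : Function.Injective (cyc hk) := by
  intro t u htu
  unfold cyc at htu
  split at htu <;> split at htu <;>
    (first | (apply Fin.ext; have := Fin.mk.injEq .. ▸ htu; omega) |
      (exfalso; have h1 := t.isLt; have h2 := u.isLt;
       have := Fin.mk.injEq .. ▸ htu; omega))

lemma cyc_ne {k : ℕ} (hk2 : 2 ≤ k) (hk : 0 < k) (t : Fin k) : cyc hk t ≠ t := by
  unfold cyc
  split
  · intro hc; have := Fin.mk.injEq .. ▸ hc; omega
  · intro hc
    have ht := t.isLt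
    have := Fin.mk.injEq .. ▸ hc
    omega

lemma cycle_exists {R C : ℕ} (ND : Fin R → Fin C → Prop)
    (h1 : ∀ a b, ND a b → ∃ b', b' ≠ b ∧ ND a b')
    (h2 : ∀ a b, ND a b → ∃ a', a' ≠ a ∧ ND a' b)
    (hne : ∃ a b, ND a b) :
    ∃ (k : ℕ) (hk : 2 ≤ k) (r : Fin k → Fin R) (sc : Fin k → Fin C),
      Function.Injective r ∧ Function.Injective sc ∧
      (∀ t, ND (r t) (sc t)) ∧
      ((∀ t, ND (r (cyc (by omega) t)) (sc t)) ∨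
       (∀ t, ND (r t) (sc (cyc (by omega) t)))) := by
  classical
  obtain ⟨a₀, b₀, hab⟩ := hne
  -- the infinite walk
  let seq : ℕ → {p : Fin R × Fin C // ND p.1 p.2} := fun n =>
    Nat.rec ⟨(a₀, b₀), hab⟩
      (fun _ prev =>
        let ha' := h2 prev.1.1 prev.1.2 prev.2
        let hb' := h1 ha'.choose prev.1.2 ha'.choose_spec.2
        ⟨(ha'.choose, hb'.choose), hb'.choose_spec.2⟩) n
  set A : ℕ → Fin R := fun n => (seq n).1.1 with hA
  set Bs : ℕ → Fin C := fun n => (seq n).1.2 with hB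
  have hInv : ∀ n, ND (A n) (Bs n) := fun n => (seq n).2
  have hstep : ∀ n, A (n+1) ≠ A n ∧ ND (A (n+1)) (Bs n) ∧ Bs (n+1) ≠ Bs n := by
    intro n
    have e1 : A (n+1) = (h2 (A n) (Bs n) (seq n).2).choose := rfl
    have e2 : Bs (n+1) = (h1 (h2 (A n) (Bs n) (seq n).2).choose (Bs n)
        (h2 (A n) (Bs n) (seq n).2).choose_spec.2).choose := rfl
    refine ⟨?_, ?_, ?_⟩
    · rw [e1]; exact (h2 (A n) (Bs n) (seq n).2).choose_spec.1
    · rw [e1]; exact (h2 (A n) (Bs n) (seq n).2).choose_spec.2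
    · rw [e2]
      exact (h1 (h2 (A n) (Bs n) (seq n).2).choose (Bs n)
        (h2 (A n) (Bs n) (seq n).2).choose_spec.2).choose_spec.1
  -- pigeonhole: repetitions exist in A and in B
  have hrepA : ∃ j, ∃ i, i < j ∧ A i = A j := by
    have hmap : ∀ x ∈ Finset.range (R+1), A x ∈ (Finset.univ : Finset (Fin R)) := by
      intro x _; exact Finset.mem_univ _
    have hcard : (Finset.univ : Finset (Fin R)).card < (Finset.range (R+1)).card := by
      simp [Finset.card_univ]
    obtain ⟨i, _, j, _, hij, heq⟩ :=
      Finset.exists_ne_map_eq_of_card_lt_of_maps_to hcard hmap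
    rcases Nat.lt_or_ge i j with h | h
    · exact ⟨j, i, h, heq⟩
    · exact ⟨i, j, by omega, heq.symm⟩
  have hrepB : ∃ j, ∃ i, i < j ∧ Bs i = Bs j := by
    have hmap : ∀ x ∈ Finset.range (C+1), Bs x ∈ (Finset.univ : Finset (Fin C)) := by
      intro x _; exact Finset.mem_univ _
    have hcard : (Finset.univ : Finset (Fin C)).card < (Finset.range (C+1)).card := by
      simp [Finset.card_univ]
    obtain ⟨i, _, j, _, hij, heq⟩ :=
      Finset.exists_ne_map_eq_of_card_lt_of_maps_to hcard hmap
    rcases Nat.lt_or_ge i j with h | h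
    · exact ⟨j, i, h, heq⟩
    · exact ⟨i, j, by omega, heq.symm⟩
  set j₁ := Nat.find hrepA with hj₁
  set j₂ := Nat.find hrepB with hj₂
  have hminA : ∀ m < j₁, ¬ ∃ i, i < m ∧ A i = A m := fun m hm => Nat.find_min hrepA hm
  have hminB : ∀ m < j₂, ¬ ∃ i, i < m ∧ Bs i = Bs m := fun m hm => Nat.find_min hrepB hm
  rcases le_or_gt j₁ j₂ with hcase | hcase
  · -- row-repeat case, pattern 1
    obtain ⟨i, hij, hAij⟩ := Nat.find_spec hrepA
    set k := j₁ - i with hkdef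
    have hk1 : 1 ≤ k := by omega
    have hk : 2 ≤ k := by
      by_contra hcon
      have hk1' : k = 1 := by omega
      have : j₁ = i + 1 := by omega
      exact (hstep i).1 (by rw [← this]; exact hAij.symm)
    refine ⟨k, hk, fun t => A (i + t.val), fun t => Bs (i + t.val), ?_, ?_, ?_, Or.inl ?_⟩
    · intro t u htu
      by_contra hne'
      rcases Nat.lt_or_ge t.val u.val with h | h
      · exact hminA (i + u.val) (by omega) ⟨i + t.val, by omega, htu⟩
      · have h' : u.val < t.val := by
          rcases Nat.lt_or_ge u.val t.val with h' | h'
          · exact h'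
          · exact absurd (Fin.ext (by omega)) hne'
        exact hminA (i + t.val) (by omega) ⟨i + u.val, by omega, htu.symm⟩
    · intro t u htu
      by_contra hne'
      rcases Nat.lt_or_ge t.val u.val with h | h
      · exact hminB (i + u.val) (by omega) ⟨i + t.val, by omega, htu⟩
      · have h' : u.val < t.val := by
          rcases Nat.lt_or_ge u.val t.val with h' | h'
          · exact h'
          · exact absurd (Fin.ext (by omega)) hne'
        exact hminB (i + t.val) (by omega) ⟨i + u.val, by omega, htu.symm⟩
    · intro t; exact hInv _
    · intro t
      unfold cyc
      split
      · next hlt =>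
        show ND (A (i + (t.val + 1))) (Bs (i + t.val))
        have := (hstep (i + t.val)).2.1
        rw [show i + (t.val+1) = (i + t.val) + 1 by omega]
        exact this
      · next hlt =>
        have htv : t.val = k - 1 := by have := t.isLt; omega
        show ND (A (i + 0)) (Bs (i + t.val))
        rw [show i + 0 = i by omega, hAij, htv,
            show i + (k - 1) = j₁ - 1 by omega]
        have := (hstep (j₁ - 1)).2.1
        rw [show j₁ - 1 + 1 = j₁ by omega] at this
        exact this
  · -- column-repeat case, pattern 2
    obtain ⟨i, hij, hBij⟩ := Nat.find_spec hrepB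
    set k := j₂ - i with hkdef
    have hk1 : 1 ≤ k := by omega
    have hk : 2 ≤ k := by
      by_contra hcon
      have hk1' : k = 1 := by omega
      have : j₂ = i + 1 := by omega
      exact (hstep i).2.2 (by rw [← this]; exact hBij.symm)
    refine ⟨k, hk, fun t => A (i + 1 + t.val), fun t => Bs (i + t.val), ?_, ?_, ?_, Or.inr ?_⟩
    · intro t u htu
      by_contra hne'
      rcases Nat.lt_or_ge t.val u.val with h | h
      · exact hminA (i + 1 + u.val) (by omega) ⟨i + 1 + t.val, by omega, htu⟩
      · have h' : u.val < t.val := by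
          rcases Nat.lt_or_ge u.val t.val with h' | h'
          · exact h'
          · exact absurd (Fin.ext (by omega)) hne'
        exact hminA (i + 1 + t.val) (by omega) ⟨i + 1 + u.val, by omega, htu.symm⟩
    · intro t u htu
      by_contra hne'
      rcases Nat.lt_or_ge t.val u.val with h | h
      · exact hminB (i + u.val) (by omega) ⟨i + t.val, by omega, htu⟩
      · have h' : u.val < t.val := by
          rcases Nat.lt_or_ge u.val t.val with h' | h'
          · exact h'
          · exact absurd (Fin.ext (by omega)) hne'
        exact hminB (i + t.val) (by omega) ⟨i + u.val, by omega, htu.symm⟩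
    · intro t
      show ND (A (i + 1 + t.val)) (Bs (i + t.val))
      have := (hstep (i + t.val)).2.1
      rw [show i + 1 + t.val = (i + t.val) + 1 by omega]
      exact this
    · intro t
      unfold cyc
      split
      · next hlt =>
        show ND (A (i + 1 + t.val)) (Bs (i + (t.val + 1)))
        rw [show i + (t.val + 1) = i + 1 + t.val by omega]
        exact hInv _
      · next hlt =>
        have htv : t.val = k - 1 := by have := t.isLt; omega
        show ND (A (i + 1 + t.val)) (Bs (i + 0))
        rw [show i + 0 = i by omega, hBij, htv,
            show i + 1 + (k - 1) = j₂ by omega]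
        exact hInv _

end Cycle


section Cancel
open Finset

lemma nondiv_bounds {d x : ℕ} (hd : 0 < d) (hx : ¬ d ∣ x) :
    d * (x / d) + 1 ≤ x ∧ x + 1 ≤ d * cdiv x d := by
  have hmod := Nat.div_add_mod x d
  have hmlt : x % d < d := Nat.mod_lt x hd
  have hm0 : x % d ≠ 0 := fun hc => hx (Nat.dvd_of_mod_eq_zero hc)
  constructor
  · omega
  · have : cdiv x d = x / d + 1 := by
      apply le_antisymm
      · rw [cdiv_le_iff hd]
        have e : d*(x/d+1) = d*(x/d)+d := by ring
        omega
      · have hlt : x / d < cdiv x d := by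
          have hle := le_cdiv hd x
          by_contra hcon
          push_neg at hcon
          have := Nat.mul_le_mul_left d hcon
          omega
        omega
    rw [this]
    have e : d*(x/d+1) = d*(x/d)+d := by ring
    omega

lemma sum_fiber_count {k R C : ℕ} (r : Fin k → Fin R) (sc : Fin k → Fin C) (a : Fin R) :
    ∑ b : Fin C, (univ.filter (fun t => r t = a ∧ sc t = b)).card
      = (univ.filter (fun t => r t = a)).card := by
  rw [Finset.card_eq_sum_card_fiberwise (f := sc) (t := univ) (fun x _ => mem_univ _)]
  congr 1
  ext b
  rw [Finset.filter_filter]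

lemma sum_fiber_count' {k R C : ℕ} (r : Fin k → Fin R) (sc : Fin k → Fin C) (b : Fin C) :
    ∑ a : Fin R, (univ.filter (fun t => r t = a ∧ sc t = b)).card
      = (univ.filter (fun t => sc t = b)).card := by
  rw [Finset.card_eq_sum_card_fiberwise (f := r) (t := univ) (fun x _ => mem_univ _)]
  congr 1
  ext a
  rw [Finset.filter_filter]
  congr 1
  apply Finset.filter_congr
  intro t _
  exact and_comm

lemma count_comp_bij {k R : ℕ} (e : Fin k → Fin k) (he : Function.Bijective e)
    (f : Fin k → Fin R) (a : Fin R) :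
    (univ.filter (fun t => f (e t) = a)).card = (univ.filter (fun t => f t = a)).card := by
  apply Finset.card_bij (fun t _ => e t)
  · intro t ht
    exact mem_filter.2 ⟨mem_univ _, (mem_filter.1 ht).2⟩
  · intro t _ u _ htu
    exact he.1 htu
  · intro u hu
    obtain ⟨t, rfl⟩ := he.2 u
    exact ⟨t, mem_filter.2 ⟨mem_univ _, (mem_filter.1 hu).2⟩, rfl⟩

lemma card_filter_le_one_of_injective {k : ℕ} {α : Type*} [DecidableEq α]
    {f : Fin k → α} (hf : Function.Injective f) (p : Fin k → Prop) [DecidablePred p]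
    (hp : ∀ t u, p t → p u → f t = f u) :
    (univ.filter (fun t => p t)).card ≤ 1 := by
  rw [Finset.card_le_one]
  intro t ht u hu
  exact hf (hp t u (mem_filter.1 ht).2 (mem_filter.1 hu).2)

lemma cancelStep {R C d : ℕ} (hd : 0 < d) (B : Fin R → Fin C → ℕ)
    {k : ℕ} (hk : 2 ≤ k) (r : Fin k → Fin R) (sc : Fin k → Fin C)
    (hrinj : Function.Injective r) (hscinj : Function.Injective sc)
    (hbase : ∀ t, ¬ d ∣ B (r t) (sc t))
    (hshift : ∀ t, ¬ d ∣ B (r (cyc (by omega : (0:ℕ) < k) t)) (sc t)) :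
    ∃ B' : Fin R → Fin C → ℕ,
      (∀ a b, d * (B a b / d) ≤ B' a b ∧ B' a b ≤ d * cdiv (B a b) d) ∧
      (∀ a, ∑ b, B' a b = ∑ b, B a b) ∧
      (∀ b, ∑ a, B' a b = ∑ a, B a b) ∧
      (univ.filter (fun p : Fin R × Fin C => ¬ d ∣ B' p.1 p.2)).card
        < (univ.filter (fun p : Fin R × Fin C => ¬ d ∣ B p.1 p.2)).card := by
  classical
  have hk0 : (0:ℕ) < k := by omega
  have hkne : (univ : Finset (Fin k)).Nonempty := ⟨⟨0, hk0⟩, mem_univ _⟩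
  set up : Fin k → ℕ := fun t => d * cdiv (B (r t) (sc t)) d - B (r t) (sc t) with hup
  set dn : Fin k → ℕ := fun t => B (r (cyc hk0 t)) (sc t) - d * (B (r (cyc hk0 t)) (sc t) / d)
    with hdn
  set F : Fin k → ℕ := fun t => min (up t) (dn t) with hF
  set δ := univ.inf' hkne F with hδ
  have hδle : ∀ t, δ ≤ F t := fun t => Finset.inf'_le F (mem_univ t)
  obtain ⟨t₀, _, hδeq⟩ := Finset.exists_mem_eq_inf' hkne F
  have hδ1 : 1 ≤ δ := by
    rw [hδ, Finset.le_inf'_iff]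
    intro t _
    have hu := (nondiv_bounds hd (hbase t)).2
    have hdn' := (nondiv_bounds hd (hshift t)).1
    simp only [hF, hup, hdn, le_min_iff]
    omega
  set Plus : Fin R → Fin C → ℕ :=
    fun a b => (univ.filter (fun t => r t = a ∧ sc t = b)).card with hPlus
  set Minus : Fin R → Fin C → ℕ :=
    fun a b => (univ.filter (fun t => r (cyc hk0 t) = a ∧ sc t = b)).card with hMinus
  have hPlus1 : ∀ a b, Plus a b ≤ 1 := by
    intro a b
    apply card_filter_le_one_of_injective hscinj
    intro t u ht hu; rw [ht.2, hu.2]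
  have hMinus1 : ∀ a b, Minus a b ≤ 1 := by
    intro a b
    apply card_filter_le_one_of_injective hscinj
    intro t u ht hu; rw [ht.2, hu.2]
  have hdisj : ∀ a b, Plus a b = 0 ∨ Minus a b = 0 := by
    intro a b
    by_contra hcon
    push_neg at hcon
    obtain ⟨hp, hm⟩ := hcon
    obtain ⟨t, ht⟩ := Finset.card_pos.1 (Nat.pos_of_ne_zero hp)
    obtain ⟨u, hu⟩ := Finset.card_pos.1 (Nat.pos_of_ne_zero hm)
    rw [mem_filter] at ht hu
    have htu : t = u := hscinj (ht.2.2.trans hu.2.2.symm)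
    subst htu
    have : r t = r (cyc hk0 t) := ht.2.1.trans hu.2.1.symm
    have := hrinj this
    exact cyc_ne hk hk0 t this.symm
  -- key pointwise facts
  have hsafe : ∀ a b, δ * Minus a b ≤ B a b + δ * Plus a b := by
    intro a b
    rcases Nat.eq_zero_or_pos (Minus a b) with h0 | hpos
    · simp [h0]
    · have h1 : Minus a b = 1 := le_antisymm (hMinus1 a b) hpos
      obtain ⟨u, hu⟩ := Finset.card_pos.1 hpos
      rw [mem_filter] at hu
      have hδdn : δ ≤ dn u := le_trans (hδle u) (min_le_right _ _)
      rw [h1, mul_one]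
      have := hu.2.1
      have := hu.2.2
      calc δ ≤ dn u := hδdn
      _ ≤ B (r (cyc hk0 u)) (sc u) := Nat.sub_le _ _
      _ = B a b := by rw [hu.2.1, hu.2.2]
      _ ≤ B a b + δ * Plus a b := Nat.le_add_right _ _
  set B' : Fin R → Fin C → ℕ := fun a b => B a b + δ * Plus a b - δ * Minus a b with hB'
  have hB'alt : ∀ a b, B' a b + δ * Minus a b = B a b + δ * Plus a b := by
    intro a b
    simp only [hB']
    exact Nat.sub_add_cancel (hsafe a b)
  refine ⟨B', ?_, ?_, ?_, ?_⟩
  · -- pointwise bounds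
    intro a b
    have hfloor : d * (B a b / d) ≤ B a b := Nat.mul_div_le _ _
    have hceil : B a b ≤ d * cdiv (B a b) d := le_cdiv hd _
    rcases Nat.eq_zero_or_pos (Minus a b) with hm0 | hmpos
    · rcases Nat.eq_zero_or_pos (Plus a b) with hp0 | hppos
      · have : B' a b = B a b := by simp only [hB']; rw [hp0, hm0]; simp
        omega
      · have hp1 : Plus a b = 1 := le_antisymm (hPlus1 a b) hppos
        have : B' a b = B a b + δ := by simp only [hB']; rw [hp1, hm0]; simp
        obtain ⟨t, ht⟩ := Finset.card_pos.1 hppos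
        rw [mem_filter] at ht
        have hδup : δ ≤ up t := le_trans (hδle t) (min_le_left _ _)
        rw [hup] at hδup
        simp only at hδup
        rw [ht.2.1, ht.2.2] at hδup
        omega
    · have hm1 : Minus a b = 1 := le_antisymm (hMinus1 a b) hmpos
      have hp0 : Plus a b = 0 := by
        rcases hdisj a b with h | h
        · exact h
        · omega
      have hB'v : B' a b = B a b - δ := by simp only [hB']; rw [hp0, hm1]; simp
      obtain ⟨u, hu⟩ := Finset.card_pos.1 hmpos
      rw [mem_filter] at hu
      have hδdn : δ ≤ dn u := le_trans (hδle u) (min_le_right _ _)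
      rw [hdn] at hδdn
      simp only at hδdn
      rw [hu.2.1, hu.2.2] at hδdn
      omega
  · -- row sums
    intro a
    have hsum : ∑ b, (B' a b + δ * Minus a b) = ∑ b, (B a b + δ * Plus a b) := by
      apply Finset.sum_congr rfl
      intro b _
      exact hB'alt a b
    rw [Finset.sum_add_distrib, Finset.sum_add_distrib, ← Finset.mul_sum, ← Finset.mul_sum]
      at hsum
    have hP : ∑ b, Plus a b = (univ.filter (fun t => r t = a)).card := by
      simp only [hPlus]; exact sum_fiber_count r sc a
    have hM : ∑ b, Minus a b = (univ.filter (fun t => r t = a)).card := by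
      simp only [hMinus]
      rw [sum_fiber_count (fun t => r (cyc hk0 t)) sc a]
      exact count_comp_bij (cyc hk0) (Finite.injective_iff_bijective.1 (cyc_injective hk0)) r a
    rw [hP, hM] at hsum
    omega
  · -- col sums
    intro b
    have hsum : ∑ a, (B' a b + δ * Minus a b) = ∑ a, (B a b + δ * Plus a b) := by
      apply Finset.sum_congr rfl
      intro a _
      exact hB'alt a b
    rw [Finset.sum_add_distrib, Finset.sum_add_distrib, ← Finset.mul_sum, ← Finset.mul_sum]
      at hsum
    have hP : ∑ a, Plus a b = (univ.filter (fun t => sc t = b)).card := by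
      simp only [hPlus]; exact sum_fiber_count' r sc b
    have hM : ∑ a, Minus a b = (univ.filter (fun t => sc t = b)).card := by
      simp only [hMinus]; exact sum_fiber_count' (fun t => r (cyc hk0 t)) sc b
    rw [hP, hM] at hsum
    omega
  · -- strictly fewer non-divisible entries
    have hPz : ∀ a b, d ∣ B a b → B' a b = B a b := by
      intro a b hdvd
      have hp0 : Plus a b = 0 := by
        by_contra hc
        obtain ⟨t, ht⟩ := Finset.card_pos.1 (Nat.pos_of_ne_zero hc)
        rw [mem_filter] at ht
        rw [← ht.2.1, ← ht.2.2] at hdvd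
        exact hbase t hdvd
      have hm0 : Minus a b = 0 := by
        by_contra hc
        obtain ⟨t, ht⟩ := Finset.card_pos.1 (Nat.pos_of_ne_zero hc)
        rw [mem_filter] at ht
        rw [← ht.2.1, ← ht.2.2] at hdvd
        exact hshift t hdvd
      simp only [hB']; rw [hp0, hm0]; simp
    have hsub : (univ.filter (fun p : Fin R × Fin C => ¬ d ∣ B' p.1 p.2))
        ⊆ (univ.filter (fun p : Fin R × Fin C => ¬ d ∣ B p.1 p.2)) := by
      intro p hp
      rw [mem_filter] at hp ⊢
      refine ⟨mem_univ _, fun hc => hp.2 ?_⟩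
      rw [hPz p.1 p.2 hc]
      exact hc
    -- find a cell that becomes divisible
    have hδF : δ = min (up t₀) (dn t₀) := hδeq
    have hkill : ∃ p : Fin R × Fin C, (¬ d ∣ B p.1 p.2) ∧ (d ∣ B' p.1 p.2) := by
      rcases le_or_gt (up t₀) (dn t₀) with hcase | hcase
      · refine ⟨(r t₀, sc t₀), hbase t₀, ?_⟩
        have hδv : δ = up t₀ := by omega
        have hp1 : Plus (r t₀) (sc t₀) = 1 := by
          apply le_antisymm (hPlus1 _ _)
          apply Finset.card_pos.2
          exact ⟨t₀, mem_filter.2 ⟨mem_univ _, rfl, rfl⟩⟩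
        have hm0 : Minus (r t₀) (sc t₀) = 0 := by
          rcases hdisj (r t₀) (sc t₀) with h | h
          · omega
          · exact h
        have hle : B (r t₀) (sc t₀) ≤ d * cdiv (B (r t₀) (sc t₀)) d := le_cdiv hd _
        have : B' (r t₀) (sc t₀) = d * cdiv (B (r t₀) (sc t₀)) d := by
          simp only [hB']
          rw [hp1, hm0, hδv]
          simp only [hup, mul_one, mul_zero, Nat.sub_zero]
          omega
        rw [this]
        exact Dvd.intro _ rfl
      · refine ⟨(r (cyc hk0 t₀), sc t₀), hshift t₀, ?_⟩
        have hδv : δ = dn t₀ := by omega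
        have hm1 : Minus (r (cyc hk0 t₀)) (sc t₀) = 1 := by
          apply le_antisymm (hMinus1 _ _)
          apply Finset.card_pos.2
          exact ⟨t₀, mem_filter.2 ⟨mem_univ _, rfl, rfl⟩⟩
        have hp0 : Plus (r (cyc hk0 t₀)) (sc t₀) = 0 := by
          rcases hdisj (r (cyc hk0 t₀)) (sc t₀) with h | h
          · exact h
          · omega
        have hfl : d * (B (r (cyc hk0 t₀)) (sc t₀) / d) ≤ B (r (cyc hk0 t₀)) (sc t₀) :=
          Nat.mul_div_le _ _
        have : B' (r (cyc hk0 t₀)) (sc t₀) = d * (B (r (cyc hk0 t₀)) (sc t₀) / d) := by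
          simp only [hB']
          rw [hp0, hm1, hδv]
          simp only [hdn, mul_one, mul_zero, Nat.add_zero]
          omega
        rw [this]
        exact Dvd.intro _ rfl
    obtain ⟨p₀, hp₀old, hp₀new⟩ := hkill
    apply Finset.card_lt_card
    rw [Finset.ssubset_iff_of_subset hsub]
    refine ⟨p₀, mem_filter.2 ⟨mem_univ _, hp₀old⟩, ?_⟩
    rw [mem_filter]
    push_neg
    intro _
    exact hp₀new

end Cancel



section ExactDiv
open Finset

lemma all_div_case {R C d : ℕ} (hd : 0 < d) (B : Fin R → Fin C → ℕ)
    (hall : ∀ a b, d ∣ B a b) :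
    ∃ s : Fin R → Fin C → ℕ,
      (∀ a b, B a b / d ≤ s a b ∧ s a b ≤ cdiv (B a b) d) ∧
      (∀ a, ∑ b, s a b = (∑ b, B a b) / d) ∧
      (∀ b, ∑ a, s a b = (∑ a, B a b) / d) := by
  refine ⟨fun a b => B a b / d, fun a b => ⟨le_refl _, div_le_cdiv _⟩, ?_, ?_⟩
  · intro a
    symm
    rw [Nat.div_eq_iff_eq_mul_left hd (Finset.dvd_sum (fun b _ => hall a b)), Finset.sum_mul]
    apply Finset.sum_congr rfl
    intro b _
    exact (Nat.div_mul_cancel (hall a b)).symm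
  · intro b
    symm
    rw [Nat.div_eq_iff_eq_mul_left hd (Finset.dvd_sum (fun a _ => hall a b)), Finset.sum_mul]
    apply Finset.sum_congr rfl
    intro a _
    exact (Nat.div_mul_cancel (hall a b)).symm

lemma count_transpose {R C d : ℕ} (B : Fin R → Fin C → ℕ) :
    (univ.filter (fun p : Fin C × Fin R => ¬ d ∣ B p.2 p.1)).card
      = (univ.filter (fun p : Fin R × Fin C => ¬ d ∣ B p.1 p.2)).card := by
  apply Finset.card_bij (fun p _ => (p.2, p.1))
  · intro p hp
    exact mem_filter.2 ⟨mem_univ _, (mem_filter.1 hp).2⟩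
  · intro p _ q _ hpq
    have h1 := congrArg Prod.fst hpq
    have h2 := congrArg Prod.snd hpq
    simp at h1 h2
    exact Prod.ext h2 h1
  · intro p hp
    exact ⟨(p.2, p.1), mem_filter.2 ⟨mem_univ _, (mem_filter.1 hp).2⟩, rfl⟩

lemma exact_div {R C d : ℕ} (hd : 0 < d) :
    ∀ (N : ℕ) (B : Fin R → Fin C → ℕ),
    (univ.filter (fun p : Fin R × Fin C => ¬ d ∣ B p.1 p.2)).card ≤ N →
    (∀ a, d ∣ ∑ b, B a b) → (∀ b, d ∣ ∑ a, B a b) →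
    ∃ s : Fin R → Fin C → ℕ,
      (∀ a b, B a b / d ≤ s a b ∧ s a b ≤ cdiv (B a b) d) ∧
      (∀ a, ∑ b, s a b = (∑ b, B a b) / d) ∧
      (∀ b, ∑ a, s a b = (∑ a, B a b) / d) := by
  intro N
  induction N with
  | zero =>
    intro B hcount hrow hcol
    apply all_div_case hd
    intro a b
    by_contra hc
    have : (a, b) ∈ univ.filter (fun p : Fin R × Fin C => ¬ d ∣ B p.1 p.2) :=
      mem_filter.2 ⟨mem_univ _, hc⟩
    have := Finset.card_pos.2 ⟨(a,b), this⟩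
    omega
  | succ N ih =>
    intro B hcount hrow hcol
    by_cases hzero : ∀ a b, d ∣ B a b
    · exact all_div_case hd B hzero
    · push_neg at hzero
      obtain ⟨a₀, b₀, hab⟩ := hzero
      -- facts for the cycle lemma
      have fact1 : ∀ a b, ¬ d ∣ B a b → ∃ b', b' ≠ b ∧ ¬ d ∣ B a b' := by
        intro a b hnd
        by_contra hc
        push_neg at hc
        have herase : d ∣ ∑ b' ∈ univ.erase b, B a b' := by
          apply Finset.dvd_sum
          intro b' hb'
          exact hc b' (Finset.mem_erase.1 hb').1
        have hsum : ∑ b' ∈ univ.erase b, B a b' + B a b = ∑ b', B a b' := by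
          rw [Finset.sum_erase_add _ _ (mem_univ b)]
        have : d ∣ B a b := by
          have h2 := hrow a
          rw [← hsum] at h2
          exact (Nat.dvd_add_right herase).1 h2
        exact hnd this
      have fact2 : ∀ a b, ¬ d ∣ B a b → ∃ a', a' ≠ a ∧ ¬ d ∣ B a' b := by
        intro a b hnd
        by_contra hc
        push_neg at hc
        have herase : d ∣ ∑ a' ∈ univ.erase a, B a' b := by
          apply Finset.dvd_sum
          intro a' ha'
          exact hc a' (Finset.mem_erase.1 ha').1
        have hsum : ∑ a' ∈ univ.erase a, B a' b + B a b = ∑ a', B a' b := by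
          rw [Finset.sum_erase_add _ _ (mem_univ a)]
        have : d ∣ B a b := by
          have h2 := hcol b
          rw [← hsum] at h2
          exact (Nat.dvd_add_right herase).1 h2
        exact hnd this
      obtain ⟨k, hk, r, sc, hrinj, hscinj, hbase, hpat⟩ :=
        cycle_exists (fun a b => ¬ d ∣ B a b) fact1 fact2 ⟨a₀, b₀, hab⟩
      have hk0 : (0:ℕ) < k := by omega
      -- get the adjusted matrix (transposing in the second pattern case)
      have hB' : ∃ B' : Fin R → Fin C → ℕ,
          (∀ a b, d * (B a b / d) ≤ B' a b ∧ B' a b ≤ d * cdiv (B a b) d) ∧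
          (∀ a, ∑ b, B' a b = ∑ b, B a b) ∧
          (∀ b, ∑ a, B' a b = ∑ a, B a b) ∧
          (univ.filter (fun p : Fin R × Fin C => ¬ d ∣ B' p.1 p.2)).card
            < (univ.filter (fun p : Fin R × Fin C => ¬ d ∣ B p.1 p.2)).card := by
        rcases hpat with hpat | hpat
        · exact cancelStep hd B hk r sc hrinj hscinj hbase hpat
        · obtain ⟨Bt', hbounds, hrows, hcols, hcard⟩ :=
            cancelStep hd (fun b a => B a b) hk sc r hscinj hrinj
              (fun t => hbase t) (fun t => hpat t)
          refine ⟨fun a b => Bt' b a, fun a b => hbounds b a, fun a => hcols a,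
            fun b => hrows b, ?_⟩
          calc (univ.filter (fun p : Fin R × Fin C => ¬ d ∣ Bt' p.2 p.1)).card
              = (univ.filter (fun p : Fin C × Fin R => ¬ d ∣ Bt' p.1 p.2)).card :=
                (count_transpose (fun a b => Bt' b a)).symm
          _ < (univ.filter (fun p : Fin C × Fin R => ¬ d ∣ B p.2 p.1)).card := hcard
          _ = (univ.filter (fun p : Fin R × Fin C => ¬ d ∣ B p.1 p.2)).card :=
                count_transpose B
      obtain ⟨B', hbounds, hrows, hcols, hcard⟩ := hB'
      obtain ⟨s, hsb, hsr, hsc⟩ := ih B' (by omega)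
        (fun a => by rw [hrows a]; exact hrow a)
        (fun b => by rw [hcols b]; exact hcol b)
      refine ⟨s, ?_, ?_, ?_⟩
      · intro a b
        obtain ⟨h1, h2⟩ := hsb a b
        obtain ⟨h3, h4⟩ := hbounds a b
        constructor
        · -- B a b / d ≤ s a b
          have : B a b / d ≤ B' a b / d := by
            rw [Nat.le_div_iff_mul_le hd]
            calc B a b / d * d = d * (B a b / d) := by ring
            _ ≤ B' a b := h3
          omega
        · -- s a b ≤ cdiv (B a b) d
          have : cdiv (B' a b) d ≤ cdiv (B a b) d := by
            rw [cdiv_le_iff hd]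
            exact h4
          omega
      · intro a; rw [hsr a, hrows a]
      · intro b; rw [hsc b, hcols b]

end ExactDiv

section Slice
open Finset

lemma cdiv_of_dvd {d x : ℕ} (hd : 0 < d) (h : d ∣ x) : cdiv x d = x / d := by
  apply le_antisymm
  · rw [cdiv_le_iff hd, Nat.mul_div_cancel' h]
  · exact div_le_cdiv x

lemma cdiv_of_not_dvd {d x : ℕ} (hd : 0 < d) (h : ¬ d ∣ x) : cdiv x d = x / d + 1 := by
  obtain ⟨h1, h2⟩ := nondiv_bounds hd h
  apply le_antisymm (cdiv_le_div_succ hd x)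
  have : d * (x / d) + 2 ≤ d * cdiv x d := by omega
  by_contra hc
  push_neg at hc
  have : cdiv x d ≤ x / d := by omega
  have := Nat.mul_le_mul_left d this
  omega

lemma cdiv_zero' {d : ℕ} (hd : 0 < d) : cdiv 0 d = 0 := by
  unfold cdiv
  rw [Nat.zero_add]
  exact Nat.div_eq_of_lt (by omega)

lemma cdiv_one_of {d x : ℕ} (hd : 0 < d) (h0 : 0 < x) (hle : x ≤ d) : cdiv x d = 1 := by
  apply le_antisymm
  · rw [cdiv_le_iff hd]; omega
  · by_contra hc
    push_neg at hc
    have : cdiv x d ≤ 0 := by omega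
    rw [cdiv_le_iff hd] at this
    omega

lemma pad_dvd {d : ℕ} (hd : 0 < d) (x : ℕ) : d ∣ x + (d - x % d) % d := by
  have hmod := Nat.div_add_mod x d
  have hlt : x % d < d := Nat.mod_lt x hd
  by_cases h0 : x % d = 0
  · rw [h0]
    simp only [Nat.sub_zero, Nat.mod_self, Nat.add_zero]
    exact Nat.dvd_of_mod_eq_zero h0
  · have he : (d - x % d) % d = d - x % d := Nat.mod_eq_of_lt (by omega)
    rw [he]
    refine ⟨x / d + 1, ?_⟩
    have e : d*(x/d+1) = d*(x/d)+d := by ring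
    omega

lemma pad_lt {d : ℕ} (hd : 0 < d) (x : ℕ) : (d - x % d) % d < d := Nat.mod_lt _ hd

/-- arithmetic for restricted row sums of the augmented matrix -/
lemma row_arith {d M sv sl q : ℕ} (hd : 0 < d) (hsv : sv = (d - M % d) % d)
    (hq : d * q = M + sv) (hsl : sl ≤ cdiv sv d) :
    M / d ≤ q - sl ∧ q - sl ≤ cdiv M d := by
  have hmod := Nat.div_add_mod M d
  have hlt : M % d < d := Nat.mod_lt M hd
  by_cases h0 : M % d = 0
  · have hsv0 : sv = 0 := by rw [hsv, h0]; simp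
    have hsl0 : sl = 0 := by
      rw [hsv0, cdiv_zero' hd] at hsl
      omega
    have hqv : q = M / d := by
      have : d * q = d * (M / d) := by omega
      exact Nat.eq_of_mul_eq_mul_left hd this
    have hcd : M / d ≤ cdiv M d := div_le_cdiv M
    omega
  · have hsv' : sv = d - M % d := by
      rw [hsv]
      exact Nat.mod_eq_of_lt (by omega)
    have hqv : q = M / d + 1 := by
      have : d * q = d * (M / d + 1) := by
        have e : d * (M/d+1) = d*(M/d)+d := by ring
        omega
      exact Nat.eq_of_mul_eq_mul_left hd this
    have hsl1 : sl ≤ 1 := by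
      rw [cdiv_one_of hd (by omega) (by omega)] at hsl
      omega
    have hcd : cdiv M d = M / d + 1 :=
      cdiv_of_not_dvd hd (fun hc => h0 (Nat.mod_eq_zero_of_dvd hc))
    omega

lemma slice_exists {R C : ℕ} (d : ℕ) (hd : 0 < d) (m : Fin R → Fin C → ℕ) :
    ∃ s : Fin R → Fin C → ℕ,
      (∀ a b, m a b / d ≤ s a b ∧ s a b ≤ cdiv (m a b) d) ∧
      (∀ a, (∑ b, m a b) / d ≤ ∑ b, s a b ∧ ∑ b, s a b ≤ cdiv (∑ b, m a b) d) ∧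
      (∀ b, (∑ a, m a b) / d ≤ ∑ a, s a b ∧ ∑ a, s a b ≤ cdiv (∑ a, m a b) d) ∧
      ((∑ a, ∑ b, m a b) / d ≤ ∑ a, ∑ b, s a b ∧
        ∑ a, ∑ b, s a b ≤ cdiv (∑ a, ∑ b, m a b) d) := by
  classical
  set n := ∑ a, ∑ b, m a b with hn
  set σ : Fin R → ℕ := fun a => (d - (∑ b, m a b) % d) % d with hσ
  set τ : Fin C → ℕ := fun b => (d - (∑ a, m a b) % d) % d with hτ
  set κ := n % d with hκ
  set Baug : Fin (R+1) → Fin (C+1) → ℕ := fun a b =>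
    Fin.lastCases (Fin.lastCases κ σ a) (fun b' => Fin.lastCases (τ b') (fun a' => m a' b') a) b
    with hBaug
  have hcell : ∀ (a : Fin R) (b : Fin C), Baug a.castSucc b.castSucc = m a b := by
    intro a b; simp [hBaug]
  have hsig : ∀ (a : Fin R), Baug a.castSucc (Fin.last C) = σ a := by
    intro a; simp [hBaug]
  have htau : ∀ (b : Fin C), Baug (Fin.last R) b.castSucc = τ b := by
    intro b; simp [hBaug]
  have hcorn : Baug (Fin.last R) (Fin.last C) = κ := by simp [hBaug]
  -- row sums of the augmented matrix are divisible
  have hrowdvd : ∀ a : Fin (R+1), d ∣ ∑ b, Baug a b := by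
    intro a
    rw [Fin.sum_univ_castSucc]
    induction a using Fin.lastCases with
    | last =>
      rw [hcorn]
      have he : ∀ b : Fin C, Baug (Fin.last R) b.castSucc = τ b := htau
      rw [Finset.sum_congr rfl (fun b _ => he b)]
      -- d ∣ ∑ τ + κ
      have h1 : d ∣ ∑ b, ((∑ a, m a b) + τ b) :=
        Finset.dvd_sum (fun b _ => by rw [hτ]; exact pad_dvd hd _)
      have h1' : ∑ b, ((∑ a, m a b) + τ b) = n + ∑ b, τ b := by
        rw [Finset.sum_add_distrib, hn, Finset.sum_comm]
      rw [h1'] at h1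
      have h2 : d ∣ (n - κ) := ⟨n / d, by have := Nat.div_add_mod n d; omega⟩
      have he2 : (∑ b, τ b) + κ = (n + ∑ b, τ b) - (n - κ) := by
        have : κ ≤ n := by rw [hκ]; exact Nat.mod_le n d
        omega
      rw [he2]
      exact Nat.dvd_sub h1 h2
    | cast a =>
      rw [hsig]
      have he : ∀ b : Fin C, Baug a.castSucc b.castSucc = m a b := hcell a
      rw [Finset.sum_congr rfl (fun b _ => he b), hσ]
      exact pad_dvd hd _
  have hcoldvd : ∀ b : Fin (C+1), d ∣ ∑ a, Baug a b := by
    intro b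
    rw [Fin.sum_univ_castSucc]
    induction b using Fin.lastCases with
    | last =>
      rw [hcorn]
      have he : ∀ a : Fin R, Baug a.castSucc (Fin.last C) = σ a := hsig
      rw [Finset.sum_congr rfl (fun a _ => he a)]
      have h1 : d ∣ ∑ a, ((∑ b, m a b) + σ a) :=
        Finset.dvd_sum (fun a _ => by rw [hσ]; exact pad_dvd hd _)
      have h1' : ∑ a, ((∑ b, m a b) + σ a) = n + ∑ a, σ a := by
        rw [Finset.sum_add_distrib, hn]
      rw [h1'] at h1
      have h2 : d ∣ (n - κ) := ⟨n / d, by have := Nat.div_add_mod n d; omega⟩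
      have he2 : (∑ a, σ a) + κ = (n + ∑ a, σ a) - (n - κ) := by
        have : κ ≤ n := by rw [hκ]; exact Nat.mod_le n d
        omega
      rw [he2]
      exact Nat.dvd_sub h1 h2
    | cast b =>
      rw [htau]
      have he : ∀ a : Fin R, Baug a.castSucc b.castSucc = m a b := fun a => hcell a b
      rw [Finset.sum_congr rfl (fun a _ => he a), hτ]
      exact pad_dvd hd _
  obtain ⟨saug, hsbounds, hsrows, hscols⟩ := exact_div hd
    ((univ.filter (fun p : Fin (R+1) × Fin (C+1) => ¬ d ∣ Baug p.1 p.2)).card)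
    Baug le_rfl hrowdvd hcoldvd
  set s : Fin R → Fin C → ℕ := fun a b => saug a.castSucc b.castSucc with hs
  -- row computations
  have hrow_eq : ∀ a : Fin R, (∑ b, s a b) + saug a.castSucc (Fin.last C)
      = ((∑ b, m a b) + σ a) / d := by
    intro a
    have := hsrows a.castSucc
    rw [Fin.sum_univ_castSucc, Fin.sum_univ_castSucc] at this
    rw [Finset.sum_congr rfl (fun b _ => hcell a b), hsig] at this
    exact this
  have hcol_eq : ∀ b : Fin C, (∑ a, s a b) + saug (Fin.last R) b.castSucc
      = ((∑ a, m a b) + τ b) / d := by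
    intro b
    have := hscols b.castSucc
    rw [Fin.sum_univ_castSucc, Fin.sum_univ_castSucc] at this
    rw [Finset.sum_congr rfl (fun a _ => hcell a b), htau] at this
    exact this
  have hrow_bound : ∀ a : Fin R,
      (∑ b, m a b) / d ≤ ∑ b, s a b ∧ ∑ b, s a b ≤ cdiv (∑ b, m a b) d := by
    intro a
    have hq : d * (((∑ b, m a b) + σ a) / d) = (∑ b, m a b) + σ a :=
      Nat.mul_div_cancel' (by rw [hσ]; exact pad_dvd hd _)
    have hsl : saug a.castSucc (Fin.last C) ≤ cdiv (σ a) d := by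
      have := (hsbounds a.castSucc (Fin.last C)).2
      rw [hsig] at this
      exact this
    have heq := hrow_eq a
    have := row_arith hd (by rw [hσ]) hq hsl
    omega
  have hcol_bound : ∀ b : Fin C,
      (∑ a, m a b) / d ≤ ∑ a, s a b ∧ ∑ a, s a b ≤ cdiv (∑ a, m a b) d := by
    intro b
    have hq : d * (((∑ a, m a b) + τ b) / d) = (∑ a, m a b) + τ b :=
      Nat.mul_div_cancel' (by rw [hτ]; exact pad_dvd hd _)
    have hsl : saug (Fin.last R) b.castSucc ≤ cdiv (τ b) d := by
      have := (hsbounds (Fin.last R) b.castSucc).2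
      rw [htau] at this
      exact this
    have heq := hcol_eq b
    have := row_arith hd (by rw [hτ]) hq hsl
    omega
  refine ⟨s, ?_, hrow_bound, hcol_bound, ?_⟩
  · intro a b
    have := hsbounds a.castSucc b.castSucc
    rw [hcell a b] at this
    exact this
  · -- the total
    set corner := saug (Fin.last R) (Fin.last C) with hcorner
    set w := n / d with hw
    -- u, v as quotients
    have hudvd : d ∣ n + ∑ a, σ a := by
      have h1 : d ∣ ∑ a, ((∑ b, m a b) + σ a) :=
        Finset.dvd_sum (fun a _ => by rw [hσ]; exact pad_dvd hd _)
      rw [Finset.sum_add_distrib] at h1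
      rw [hn]
      exact h1
    have hvdvd : d ∣ (∑ a, σ a) + κ := by
      have := hcoldvd (Fin.last C)
      rw [Fin.sum_univ_castSucc, hcorn,
        Finset.sum_congr rfl (fun a _ => hsig a)] at this
      exact this
    set u := (n + ∑ a, σ a) / d with hu
    set v := ((∑ a, σ a) + κ) / d with hv
    have hueq : d * u = n + ∑ a, σ a := Nat.mul_div_cancel' hudvd
    have hveq : d * v = (∑ a, σ a) + κ := Nat.mul_div_cancel' hvdvd
    have hκn : n = d * w + κ := by rw [hw, hκ]; have := Nat.div_add_mod n d; omega
    have huwv : u = w + v := by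
      have : d * u = d * (w + v) := by
        have e : d * (w + v) = d * w + d * v := by ring
        omega
      exact Nat.eq_of_mul_eq_mul_left hd this
    -- sum the row equations
    have hsum_rows : (∑ a, ∑ b, s a b) + ∑ a : Fin R, saug a.castSucc (Fin.last C) = u := by
      have h1 : ∑ a, ((∑ b, s a b) + saug a.castSucc (Fin.last C))
          = ∑ a, (((∑ b, m a b) + σ a) / d) :=
        Finset.sum_congr rfl (fun a _ => hrow_eq a)
      rw [Finset.sum_add_distrib] at h1
      have h2 : d * (∑ a, (((∑ b, m a b) + σ a) / d)) = d * u := by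
        rw [Finset.mul_sum, hueq]
        rw [Finset.sum_congr rfl
          (fun a _ => Nat.mul_div_cancel' (show d ∣ (∑ b, m a b) + σ a by
            rw [hσ]; exact pad_dvd hd _))]
        rw [hn, Finset.sum_add_distrib]
      have h3 : ∑ a, (((∑ b, m a b) + σ a) / d) = u := Nat.eq_of_mul_eq_mul_left hd h2
      omega
    -- the last column equation
    have hlastcol : (∑ a : Fin R, saug a.castSucc (Fin.last C)) + corner = v := by
      have := hscols (Fin.last C)
      rw [Fin.sum_univ_castSucc, Fin.sum_univ_castSucc, hcorn,
        Finset.sum_congr rfl (fun a _ => hsig a)] at this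
      rw [← hv] at this
      exact this
    -- corner bounds
    have hcorner_ub : corner ≤ cdiv κ d := by
      have := (hsbounds (Fin.last R) (Fin.last C)).2
      rw [hcorn] at this
      exact this
    have hκlt : κ < d := by rw [hκ]; exact Nat.mod_lt n hd
    have htotal : ∑ a, ∑ b, s a b = w + corner := by omega
    constructor
    · omega
    · rw [htotal]
      by_cases hκ0 : κ = 0
      · have : corner = 0 := by
          rw [hκ0, cdiv_zero' hd] at hcorner_ub
          omega
        rw [this]
        have : cdiv n d = n / d := cdiv_of_dvd hd ⟨w, by omega⟩
        omega
      · have hc1 : corner ≤ 1 := by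
          rw [cdiv_one_of hd (by omega) (by omega)] at hcorner_ub
          omega
        have : cdiv n d = n / d + 1 := by
          apply cdiv_of_not_dvd hd
          intro hc
          have := Nat.mod_eq_zero_of_dvd hc
          omega
        omega

end Slice


section Slices
open Finset

lemma cdiv_one (x : ℕ) : cdiv x 1 = x := by unfold cdiv; simp

lemma slices_exists {R C : ℕ} : ∀ (h : ℕ), 0 < h → ∀ (m : Fin R → Fin C → ℕ),
    ∃ t : Fin R → Fin C → Fin h → ℕ,
      (∀ a b, ∑ c, t a b c = m a b) ∧
      (∀ a b c, m a b / h ≤ t a b c ∧ t a b c ≤ cdiv (m a b) h) ∧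
      (∀ a c, (∑ b, m a b) / h ≤ ∑ b, t a b c ∧ ∑ b, t a b c ≤ cdiv (∑ b, m a b) h) ∧
      (∀ b c, (∑ a, m a b) / h ≤ ∑ a, t a b c ∧ ∑ a, t a b c ≤ cdiv (∑ a, m a b) h) ∧
      (∀ c, (∑ a, ∑ b, m a b) / h ≤ ∑ a, ∑ b, t a b c ∧
        ∑ a, ∑ b, t a b c ≤ cdiv (∑ a, ∑ b, m a b) h) := by
  intro h
  induction h with
  | zero => omega
  | succ h ih =>
    intro _ m
    rcases Nat.eq_zero_or_pos h with rfl | hh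
    · -- h + 1 = 1
      refine ⟨fun a b _ => m a b, ?_, ?_, ?_, ?_, ?_⟩
      · intro a b; simp
      · intro a b c; simp [Nat.div_one, cdiv_one]
      · intro a c; simp [Nat.div_one, cdiv_one]
      · intro b c; simp [Nat.div_one, cdiv_one]
      · intro c; simp [Nat.div_one, cdiv_one]
    · -- h ≥ 1, slice off one part and recurse
      obtain ⟨s, hcell, hrow, hcol, htot⟩ := slice_exists (h+1) (by omega) m
      set m' : Fin R → Fin C → ℕ := fun a b => m a b - s a b with hm'
      have hcell_tr : ∀ a b, s a b ≤ m a b ∧ m a b / (h+1) ≤ m' a b / h ∧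
          cdiv (m' a b) h ≤ cdiv (m a b) (h+1) := by
        intro a b
        exact transfer hh (hcell a b).1 (hcell a b).2
      have hsum_m' : ∀ a, ∑ b, m' a b = (∑ b, m a b) - (∑ b, s a b) := by
        intro a
        simp only [hm']
        exact Finset.sum_tsub_distrib univ (fun b _ => (hcell_tr a b).1)
      have hsum_m'c : ∀ b, ∑ a, m' a b = (∑ a, m a b) - (∑ a, s a b) := by
        intro b
        simp only [hm']
        exact Finset.sum_tsub_distrib univ (fun a _ => (hcell_tr a b).1)
      have hrow_le : ∀ a, ∑ b, s a b ≤ ∑ b, m a b :=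
        fun a => Finset.sum_le_sum (fun b _ => (hcell_tr a b).1)
      have hcol_le : ∀ b, ∑ a, s a b ≤ ∑ a, m a b :=
        fun b => Finset.sum_le_sum (fun a _ => (hcell_tr a b).1)
      have hsum_m't : ∑ a, ∑ b, m' a b = (∑ a, ∑ b, m a b) - (∑ a, ∑ b, s a b) := by
        rw [Finset.sum_congr rfl (fun a _ => hsum_m' a)]
        exact Finset.sum_tsub_distrib univ (fun a _ => hrow_le a)
      obtain ⟨t', hcell', hrowb', hcolb', hrow'', htot'⟩ := ih hh m'
      refine ⟨fun a b => Fin.cons (s a b) (t' a b), ?_, ?_, ?_, ?_, ?_⟩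
      · intro a b
        rw [Fin.sum_univ_succ]
        simp only [Fin.cons_zero, Fin.cons_succ]
        rw [hcell' a b]
        have := (hcell_tr a b).1
        simp only [hm']
        omega
      · intro a b c
        induction c using Fin.cases with
        | zero => simpa using hcell a b
        | succ c =>
          simp only [Fin.cons_succ]
          have h1 := hrowb' a b c
          have h2 := (hcell_tr a b).2.1
          have h3 := (hcell_tr a b).2.2
          omega
      · intro a c
        induction c using Fin.cases with
        | zero => simpa using hrow a
        | succ c =>
          simp only [Fin.cons_succ]
          have h1 := hcolb' a c
          have htr := transfer hh (hrow a).1 (hrow a).2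
          rw [← hsum_m' a] at htr
          omega
      · intro b c
        induction c using Fin.cases with
        | zero => simpa using hcol b
        | succ c =>
          simp only [Fin.cons_succ]
          have h1 := hrow'' b c
          have htr := transfer hh (hcol b).1 (hcol b).2
          rw [← hsum_m'c b] at htr
          omega
      · intro c
        induction c using Fin.cases with
        | zero => simpa using htot
        | succ c =>
          simp only [Fin.cons_succ]
          have h1 := htot' c
          have htr := transfer hh htot.1 htot.2
          rw [← hsum_m't] at htr
          omega

end Slices


/-- Number of positions where vector `x` takes value `a`. -/
def countVal {n g : ℕ} (x : Fin n → Fin g) (a : Fin g) : ℕ :=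
  (Finset.univ.filter (fun i => x i = a)).card

/-- A length-`n` vector over `Fin g` is balanced if each symbol occurs
`⌊n/g⌋` or `⌈n/g⌉` times. -/
def BalancedVec {n g : ℕ} (x : Fin n → Fin g) : Prop :=
  ∀ a : Fin g, countVal x a = n / g ∨ countVal x a = (n + g - 1) / g

/-- Number of positions where `(x, y)` takes the value pair `(a, b)`. -/
def countPair {n g₁ g₂ : ℕ} (x : Fin n → Fin g₁) (y : Fin n → Fin g₂)
    (a : Fin g₁) (b : Fin g₂) : ℕ :=
  (Finset.univ.filter (fun i => x i = a ∧ y i = b)).card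

/-- Two vectors are pairwise balanced if both are balanced and each pair of
symbols occurs `⌊n/(g₁g₂)⌋` or `⌈n/(g₁g₂)⌉` times. -/
def PairwiseBalancedVec {n g₁ g₂ : ℕ} (x : Fin n → Fin g₁) (y : Fin n → Fin g₂) : Prop :=
  BalancedVec x ∧ BalancedVec y ∧
    ∀ (a : Fin g₁) (b : Fin g₂),
      countPair x y a b = n / (g₁ * g₂) ∨ countPair x y a b = (n + g₁ * g₂ - 1) / (g₁ * g₂)

/-- 2-qualitative independence. -/
def QI2 {n g₁ g₂ : ℕ} (x : Fin n → Fin g₁) (y : Fin n → Fin g₂) : Prop :=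
  ∀ (a : Fin g₁) (b : Fin g₂), ∃ j : Fin n, x j = a ∧ y j = b

/-- 3-qualitative independence. -/
def QI3 {n g₁ g₂ g₃ : ℕ} (x : Fin n → Fin g₁) (y : Fin n → Fin g₂) (z : Fin n → Fin g₃) : Prop :=
  ∀ (a : Fin g₁) (b : Fin g₂) (c : Fin g₃), ∃ j : Fin n, x j = a ∧ y j = b ∧ z j = c

section Glue
open Finset
variable {n g₁ g₂ : ℕ}

lemma countVal_eq_sum_right (x₁ : Fin n → Fin g₁) (x₂ : Fin n → Fin g₂) (a : Fin g₁) :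
    countVal x₁ a = ∑ b, countPair x₁ x₂ a b := by
  unfold countVal countPair
  rw [Finset.card_eq_sum_card_fiberwise (f := x₂) (t := univ) (fun i _ => mem_univ _)]
  apply Finset.sum_congr rfl
  intro b _
  rw [Finset.filter_filter]

lemma countVal_eq_sum_left (x₁ : Fin n → Fin g₁) (x₂ : Fin n → Fin g₂) (b : Fin g₂) :
    countVal x₂ b = ∑ a, countPair x₁ x₂ a b := by
  unfold countVal countPair
  rw [Finset.card_eq_sum_card_fiberwise (f := x₁) (t := univ) (fun i _ => mem_univ _)]
  apply Finset.sum_congr rfl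
  intro a _
  rw [Finset.filter_filter]
  congr 1
  apply Finset.filter_congr
  intro i _
  exact and_comm

lemma sum_countVal (x₁ : Fin n → Fin g₁) : ∑ a, countVal x₁ a = n := by
  unfold countVal
  rw [← Finset.card_eq_sum_card_fiberwise (f := x₁) (t := univ) (fun i _ => mem_univ _)]
  simp

end Glue

section MainProof
open Finset

theorem stmt2 {n g₁ g₂ : ℕ} (x₁ : Fin n → Fin g₁) (x₂ : Fin n → Fin g₂)
    (hpb : PairwiseBalancedVec x₁ x₂) (h : ℕ) (hh : 0 < h) (hn : g₁ * g₂ * h ≤ n) :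
    ∃ y : Fin n → Fin h, BalancedVec y ∧ QI3 x₁ x₂ y ∧
      PairwiseBalancedVec x₁ y ∧ PairwiseBalancedVec x₂ y := by
  classical
  rcases Nat.eq_zero_or_pos n with hn0 | hn0
  · -- degenerate case n = 0
    subst hn0
    have hg0 : g₁ = 0 ∨ g₂ = 0 := by
      have h1 : g₁ * g₂ * h = 0 := by omega
      rcases Nat.mul_eq_zero.1 h1 with h2 | h2
      · rcases Nat.mul_eq_zero.1 h2 with h3 | h3
        · left; exact h3
        · right; exact h3
      · omega
    set y : Fin 0 → Fin h := fun i => i.elim0 with hy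
    have hby : BalancedVec y := by
      intro c
      left
      simp [countVal]
    refine ⟨y, hby, ?_, ?_, ?_⟩
    · intro a b c
      rcases hg0 with hg | hg
      · exact absurd a.isLt (by omega)
      · exact absurd b.isLt (by omega)
    · refine ⟨hpb.1, hby, ?_⟩
      intro a c
      left
      simp [countPair]
    · refine ⟨hpb.2.1, hby, ?_⟩
      intro a c
      left
      simp [countPair]
  · -- main case
    have hg₁ : 0 < g₁ := by have := (x₁ ⟨0, hn0⟩).isLt; omega
    have hg₂ : 0 < g₂ := by have := (x₂ ⟨0, hn0⟩).isLt; omega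
    obtain ⟨t, hcell, hcellb, hrowb, hcolb, htotb⟩ :=
      slices_exists h hh (fun a b => countPair x₁ x₂ a b)
    have hMa : ∀ a, (∑ b, countPair x₁ x₂ a b) = countVal x₁ a :=
      fun a => (countVal_eq_sum_right x₁ x₂ a).symm
    have hNb : ∀ b, (∑ a, countPair x₁ x₂ a b) = countVal x₂ b :=
      fun b => (countVal_eq_sum_left x₁ x₂ b).symm
    have htot : (∑ a, ∑ b, countPair x₁ x₂ a b) = n := by
      rw [Finset.sum_congr rfl (fun a _ => hMa a)]
      exact sum_countVal x₁
    set dflt : Fin h := ⟨0, hh⟩ with hdflt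
    set L : Fin g₁ → Fin g₂ → List (Fin h) :=
      fun a b => (List.finRange h).flatMap (fun c => List.replicate (t a b c) c) with hL
    have hlen : ∀ a b, (L a b).length = countPair x₁ x₂ a b := by
      intro a b
      simp only [hL]
      rw [List.length_flatMap]
      have e : ((List.finRange h).map (List.length ∘ fun c => List.replicate (t a b c) c)).sum
          = ∑ c : Fin h, t a b c := by
        rw [Fin.sum_univ_def]
        congr 1
        apply List.map_congr_left
        intro c _
        simp
      exact e.trans (hcell a b)
    have hcount : ∀ a b c, (L a b).count c = t a b c := by
      intro a b c
      simp only [hL]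
      rw [List.count_flatMap]
      have e : ((List.finRange h).map (List.count c ∘ fun c' => List.replicate (t a b c') c')).sum
          = ∑ c' : Fin h, if c' = c then t a b c' else 0 := by
        rw [Fin.sum_univ_def]
        congr 1
        apply List.map_congr_left
        intro c' _
        simp [List.count_replicate]
      rw [e]
      simp
    set cell : Fin g₁ → Fin g₂ → Finset (Fin n) :=
      fun a b => univ.filter (fun j => x₁ j = a ∧ x₂ j = b) with hcelldef
    have hcellcard : ∀ a b, (cell a b).card = countPair x₁ x₂ a b := fun a b => rfl
    set y : Fin n → Fin h :=
      fun i => (L (x₁ i) (x₂ i)).getD (rnk (cell (x₁ i) (x₂ i)) i) dflt with hy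
    have htriple : ∀ a b c,
        (univ.filter (fun i => x₁ i = a ∧ x₂ i = b ∧ y i = c)).card = t a b c := by
      intro a b c
      have e1 : univ.filter (fun i => x₁ i = a ∧ x₂ i = b ∧ y i = c)
          = (cell a b).filter (fun i => y i = c) := by
        simp only [hcelldef, Finset.filter_filter]
        apply Finset.filter_congr
        intro i _
        tauto
      rw [e1]
      have e2 : (cell a b).filter (fun i => y i = c)
          = (cell a b).filter (fun i => (L a b).getD (rnk (cell a b) i) dflt = c) := by
        apply Finset.filter_congr
        intro i hi
        simp only [hcelldef, Finset.mem_filter] at hi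
        simp only [hy, hi.2.1, hi.2.2]
      rw [e2]
      rw [card_filter_rnk (cell a b) (fun r => (L a b).getD r dflt = c)]
      rw [hcellcard, ← hlen a b, card_filter_getD (L a b) dflt c]
      exact hcount a b c
    have hcp1 : ∀ a c, countPair x₁ y a c = ∑ b, t a b c := by
      intro a c
      unfold countPair
      rw [Finset.card_eq_sum_card_fiberwise (f := x₂) (t := univ) (fun i _ => mem_univ _)]
      apply Finset.sum_congr rfl
      intro b _
      rw [Finset.filter_filter, ← htriple a b c]
      congr 1
      apply Finset.filter_congr
      intro i _
      tauto
    have hcp2 : ∀ b c, countPair x₂ y b c = ∑ a, t a b c := by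
      intro b c
      unfold countPair
      rw [Finset.card_eq_sum_card_fiberwise (f := x₁) (t := univ) (fun i _ => mem_univ _)]
      apply Finset.sum_congr rfl
      intro a _
      rw [Finset.filter_filter, ← htriple a b c]
      congr 1
      apply Finset.filter_congr
      intro i _
      tauto
    have hcv : ∀ c, countVal y c = ∑ a, ∑ b, t a b c := by
      intro c
      unfold countVal
      rw [Finset.card_eq_sum_card_fiberwise (f := x₁) (t := univ) (fun i _ => mem_univ _)]
      apply Finset.sum_congr rfl
      intro a _
      rw [Finset.filter_filter, ← hcp1 a c]
      unfold countPair
      congr 1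
      apply Finset.filter_congr
      intro i _
      exact and_comm
    have hBy : BalancedVec y := by
      intro c
      have hb := htotb c
      rw [htot] at hb
      have h1 : n / h ≤ countVal y c := by rw [hcv c]; exact hb.1
      have h2 : countVal y c ≤ cdiv n h := by rw [hcv c]; exact hb.2
      exact window0 hh h1 h2
    have hQI : QI3 x₁ x₂ y := by
      intro a b c
      have hm : h ≤ countPair x₁ x₂ a b := by
        have hp := hpb.2.2 a b
        have hfl : h ≤ n / (g₁ * g₂) := by
          rw [Nat.le_div_iff_mul_le (Nat.mul_pos hg₁ hg₂)]
          calc h * (g₁ * g₂) = g₁ * g₂ * h := by ring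
          _ ≤ n := hn
        have hfc := div_le_cdiv (k := g₁ * g₂) n
        simp only [cdiv] at hfc
        omega
      have h1 : 1 ≤ t a b c := by
        have h2 := (hcellb a b c).1
        have h3 : 1 ≤ countPair x₁ x₂ a b / h := (Nat.one_le_div_iff hh).2 hm
        omega
      have h4 := htriple a b c
      have hpos : 0 < (univ.filter (fun i => x₁ i = a ∧ x₂ i = b ∧ y i = c)).card := by omega
      obtain ⟨j, hj⟩ := Finset.card_pos.1 hpos
      exact ⟨j, (Finset.mem_filter.1 hj).2⟩
    have hP1 : PairwiseBalancedVec x₁ y := by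
      refine ⟨hpb.1, hBy, ?_⟩
      intro a c
      have hb := hrowb a c
      rw [hMa a] at hb
      have h1 : countVal x₁ a / h ≤ countPair x₁ y a c := by rw [hcp1 a c]; exact hb.1
      have h2 : countPair x₁ y a c ≤ cdiv (countVal x₁ a) h := by rw [hcp1 a c]; exact hb.2
      exact window hg₁ hh (hpb.1 a) h1 h2
    have hP2 : PairwiseBalancedVec x₂ y := by
      refine ⟨hpb.2.1, hBy, ?_⟩
      intro b c
      have hb := hcolb b c
      rw [hNb b] at hb
      have h1 : countVal x₂ b / h ≤ countPair x₂ y b c := by rw [hcp2 b c]; exact hb.1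
      have h2 : countPair x₂ y b c ≤ cdiv (countVal x₂ b) h := by rw [hcp2 b c]; exact hb.2
      exact window hg₂ hh (hpb.2.1 b) h1 h2
    exact ⟨y, hBy, hQI, hP1, hP2⟩

end MainProof
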